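/- For every n ≥ 1, the taxi walk connective constant satisfies μ_taxi ≤ (c_{n+1}/2)^{1/n}; equivalently, 2·μ_taxi^n ≤ c_{n+1}. -/

import Mathlib

open Filter

/-- The oriented step relation of the Manhattan lattice. -/
def taxiStep (u v : ℤ × ℤ) : Prop :=
  (Even u.2 ∧ v = (u.1 + 1, u.2)) ∨
  (Odd u.2 ∧ v = (u.1 - 1, u.2)) ∨
  (Even u.1 ∧ v = (u.1, u.2 + 1)) ∨
  (Odd u.1 ∧ v = (u.1, u.2 - 1))

/-- Perpendicularity of two step vectors. -/
def perp (d e : ℤ × ℤ) : Prop := d.1 * e.1 + d.2 * e.2 = 0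

instance (d e : ℤ × ℤ) : Decidable (perp d e) := by unfold perp; infer_instance

/-- The walk `l` turns at its `i`-th vertex (meaningful for `1 ≤ i ≤ l.length - 2`). -/
def turnAt (l : List (ℤ × ℤ)) (i : ℕ) : Prop :=
  perp (l.getD i 0 - l.getD (i - 1) 0) (l.getD (i + 1) 0 - l.getD i 0)

instance (l : List (ℤ × ℤ)) (i : ℕ) : Decidable (turnAt l i) := by
  unfold turnAt; infer_instance

/-- A taxi walk, recorded as its list of vertices (a walk of length `n` has `n + 1` vertices). -/
def IsTaxiWalk (l : List (ℤ × ℤ)) : Prop :=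
  l ≠ [] ∧ l.Nodup ∧
  (∀ i, i + 1 < l.length → taxiStep (l.getD i 0) (l.getD (i + 1) 0)) ∧
  (∀ i, 1 ≤ i → i + 2 < l.length → ¬(turnAt l i ∧ turnAt l (i + 1)))

/-- The set of taxi walks of length `n` starting at the origin. -/
def originWalks (n : ℕ) : Set (List (ℤ × ℤ)) :=
  {l | IsTaxiWalk l ∧ l.length = n + 1 ∧ l.getD 0 0 = 0}

/-- `taxiCount n` is `c_n`, the number of taxi walks of length `n` starting at the origin. -/
noncomputable def taxiCount (n : ℕ) : ℕ := (originWalks n).ncard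

/-- The turn-word of a walk: `true` (the letter `t`) where the walk turns,
`false` (the letter `s`) where it goes straight. -/
def turnWord (l : List (ℤ × ℤ)) : List Bool :=
  (List.range (l.length - 2)).map fun i => decide (turnAt l (i + 1))

/-- The encoding of a taxi walk starting at the origin: the first coordinate is `true`
(for `N`) if `v₁ = (0,1)` and `false` (for `E`) if `v₁ = (1,0)`; the second is the turn-word. -/
def encode (l : List (ℤ × ℤ)) : Bool × List Bool :=
  (decide (l.getD 1 0 = (0, 1)), turnWord l)

/-- A bridge: a taxi walk from `(0,0)` to `(1,0)` staying at abscissa `≥ 1` after the start,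
whose last step is horizontal and ends at maximal abscissa. -/
def IsBridge (l : List (ℤ × ℤ)) : Prop :=
  IsTaxiWalk l ∧ 2 ≤ l.length ∧ l.getD 0 0 = (0, 0) ∧ l.getD 1 0 = (1, 0) ∧
  (∀ i, 1 ≤ i → i < l.length → 1 ≤ (l.getD i 0).1) ∧
  (l.getD (l.length - 1) 0).2 = (l.getD (l.length - 2) 0).2 ∧
  (∀ i, i < l.length → (l.getD i 0).1 ≤ (l.getD (l.length - 1) 0).1)

/-- `bridgeCount n` is `b_n`, the number of bridges of length `n`, with `b_0 = 1`. -/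
noncomputable def bridgeCount : ℕ → ℕ
  | 0 => 1
  | n + 1 => {l : List (ℤ × ℤ) | IsBridge l ∧ l.length = n + 2}.ncard

/-- The normalizing symmetry `f_{(x,y)}` of the oriented Manhattan lattice. -/
def normMap (p : ℤ × ℤ) (q : ℤ × ℤ) : ℤ × ℤ :=
  if Even p.1 then
    (if Even p.2 then (q.1 - p.1, q.2 - p.2) else (-(q.1 - p.1), q.2 - p.2))
  else
    (if Even p.2 then (q.1 - p.1, -(q.2 - p.2)) else (-(q.1 - p.1), -(q.2 - p.2)))

/-- The vertex `v_i` is a cutvertex of the bridge `l`. -/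
def IsCutAt (l : List (ℤ × ℤ)) (i : ℕ) : Prop :=
  0 < i ∧ i + 1 < l.length ∧
  IsBridge (l.take (i + 1)) ∧
  l.getD (i + 1) 0 = l.getD i 0 + (1, 0) ∧
  IsBridge ((l.drop i).map (normMap (l.getD i 0)))

/-- An irreducible bridge: a bridge with no cutvertex. -/
def IsIrreducibleBridge (l : List (ℤ × ℤ)) : Prop :=
  IsBridge l ∧ ∀ i, ¬ IsCutAt l i

/-- `irrBridgeCount n` is `a_n`, the number of irreducible bridges of length `n`, with `a_0 = 0`. -/
noncomputable def irrBridgeCount : ℕ → ℕ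
  | 0 => 0
  | n + 1 => {l : List (ℤ × ℤ) | IsIrreducibleBridge l ∧ l.length = n + 2}.ncard

-- Stage 1: step determinism
lemma next_unique {u v w w' : ℤ × ℤ} (h1 : taxiStep u v) (h2 : taxiStep v w)
    (h3 : taxiStep v w') (hp : perp (v - u) (w - v) ↔ perp (v - u) (w' - v)) : w = w' := by
  rcases h1 with ⟨hp1, rfl⟩ | ⟨hp1, rfl⟩ | ⟨hp1, rfl⟩ | ⟨hp1, rfl⟩ <;>
  rcases h2 with ⟨hp2, rfl⟩ | ⟨hp2, rfl⟩ | ⟨hp2, rfl⟩ | ⟨hp2, rfl⟩ <;>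
  rcases h3 with ⟨hp3, h3⟩ | ⟨hp3, h3⟩ | ⟨hp3, h3⟩ | ⟨hp3, h3⟩ <;>
  simp only [perp, Prod.ext_iff, Prod.fst_sub, Prod.snd_sub, Int.even_iff, Int.odd_iff,
    Prod.mk.injEq, Prod.fst_add, Prod.snd_add] at * <;> omega

-- Stage 2: getD helpers and walk extensionality
lemma getD_lt {l : List (ℤ × ℤ)} {i : ℕ} (h : i < l.length) : l.getD i 0 = l[i] :=
  List.getD_eq_getElem l 0 h

lemma turnWord_length (l : List (ℤ × ℤ)) : (turnWord l).length = l.length - 2 := by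
  simp [turnWord]

lemma turnWord_get {l : List (ℤ × ℤ)} {j : ℕ} (h : j < l.length - 2) :
    (turnWord l)[j]'(by simpa [turnWord_length]) = decide (turnAt l (j + 1)) := by
  simp [turnWord]

lemma walk_ext {l l' : List (ℤ × ℤ)} (hl : IsTaxiWalk l) (hl' : IsTaxiWalk l')
    (hlen : l.length = l'.length) (h0 : l.getD 0 0 = l'.getD 0 0)
    (h1 : l.getD 1 0 = l'.getD 1 0) (hw : turnWord l = turnWord l') : l = l' := by
  obtain ⟨-, -, hstep, -⟩ := hl
  obtain ⟨-, -, hstep', -⟩ := hl'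
  have key : ∀ i, i < l.length → l.getD i 0 = l'.getD i 0 := by
    intro i
    induction i using Nat.strong_induction_on with
    | _ i IH =>
      match i with
      | 0 => exact fun _ => h0
      | 1 => exact fun _ => h1
      | (j+2) =>
        intro hi
        have e0 : l.getD j 0 = l'.getD j 0 := IH j (by omega) (by omega)
        have e1 : l.getD (j+1) 0 = l'.getD (j+1) 0 := IH (j+1) (by omega) (by omega)
        have hj : j < l.length - 2 := by omega
        have hj' : j < l'.length - 2 := by omega
        have hb : decide (turnAt l (j+1)) = decide (turnAt l' (j+1)) := by
          rw [← turnWord_get hj, ← turnWord_get hj']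
          exact List.getElem_of_eq hw _
        have hiff : turnAt l (j+1) ↔ turnAt l' (j+1) := by
          constructor <;> intro h <;> [skip; skip] <;>
            · have := hb
              simp only [decide_eq_decide] at this
              tauto
        have hs1 : taxiStep (l.getD j 0) (l.getD (j+1) 0) := hstep j (by omega)
        have hs2 : taxiStep (l.getD (j+1) 0) (l.getD (j+2) 0) := hstep (j+1) (by omega)
        have hs3 : taxiStep (l'.getD (j+1) 0) (l'.getD (j+2) 0) := hstep' (j+1) (by omega)
        rw [← e1] at hs3
        refine next_unique hs1 hs2 hs3 ?_
        have hT : turnAt l (j+1) ↔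
            perp (l.getD (j+1) 0 - l.getD j 0) (l.getD (j+2) 0 - l.getD (j+1) 0) := by
          simp [turnAt]
        have hT' : turnAt l' (j+1) ↔
            perp (l'.getD (j+1) 0 - l'.getD j 0) (l'.getD (j+2) 0 - l'.getD (j+1) 0) := by
          simp [turnAt]
        rw [← hT, e0, e1, ← hT']
        exact hiff
  apply List.ext_getElem hlen
  intro i hi hi'
  rw [← getD_lt hi, ← getD_lt hi']
  exact key i hi

-- Stage 3: automorphisms
def swapMap (q : ℤ × ℤ) : ℤ × ℤ := (q.2, q.1)

lemma swap_inj : Function.Injective swapMap := by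
  intro q r h; simp [swapMap, Prod.ext_iff] at *; tauto

set_option linter.unnecessarySeqFocus false in
lemma swap_step {u v : ℤ × ℤ} (h : taxiStep u v) : taxiStep (swapMap u) (swapMap v) := by
  unfold taxiStep swapMap at *
  simp only [Prod.ext_iff, Prod.mk.injEq, Int.even_iff, Int.odd_iff] at * <;> omega

lemma swap_perp (a b c d : ℤ × ℤ) :
    perp (swapMap b - swapMap a) (swapMap d - swapMap c) ↔ perp (b - a) (d - c) := by
  unfold perp swapMap
  simp only [Prod.fst_sub, Prod.snd_sub]
  constructor <;> intro h <;> linear_combination h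

lemma norm_inj (p : ℤ × ℤ) : Function.Injective (normMap p) := by
  intro q r h
  unfold normMap at h
  split_ifs at h <;> simp only [Prod.ext_iff, Prod.mk.injEq] at * <;> omega

set_option maxHeartbeats 1000000 in
lemma norm_step (p : ℤ × ℤ) {u v : ℤ × ℤ} (h : taxiStep u v) :
    taxiStep (normMap p u) (normMap p v) := by
  rcases h with ⟨h, rfl⟩ | ⟨h, rfl⟩ | ⟨h, rfl⟩ | ⟨h, rfl⟩ <;>
  · unfold taxiStep normMap
    split_ifs with h1 h2 h2 <;>
      simp [Prod.mk.injEq, Int.even_iff, Int.odd_iff] at h h1 h2 ⊢ <;> omega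

lemma norm_perp (p : ℤ × ℤ) (a b c d : ℤ × ℤ) :
    perp (normMap p b - normMap p a) (normMap p d - normMap p c) ↔ perp (b - a) (d - c) := by
  unfold perp normMap
  split_ifs <;> simp only [Prod.fst_sub, Prod.snd_sub] <;>
    constructor <;> intro h <;> linear_combination h

lemma norm_self (p : ℤ × ℤ) : normMap p p = 0 := by
  unfold normMap; split_ifs <;> simp [Prod.ext_iff]

-- mapped walks
lemma map_getD (f : ℤ × ℤ → ℤ × ℤ) {l : List (ℤ × ℤ)} {i : ℕ} (h : i < l.length) :
    (l.map f).getD i 0 = f (l.getD i 0) := by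
  rw [getD_lt (by simpa using h), getD_lt h, List.getElem_map]

section MapWalk
variable {f : ℤ × ℤ → ℤ × ℤ}
  (hinj : Function.Injective f)
  (hstep : ∀ u v : ℤ × ℤ, taxiStep u v → taxiStep (f u) (f v))
  (hperp : ∀ a b c d : ℤ × ℤ,
    perp (f b - f a) (f d - f c) ↔ perp (b - a) (d - c))

lemma turnAt_map (hperp : ∀ a b c d : ℤ × ℤ,
    perp (f b - f a) (f d - f c) ↔ perp (b - a) (d - c))
    {l : List (ℤ × ℤ)} {i : ℕ} (h1 : 1 ≤ i) (h2 : i + 1 < l.length) :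
    turnAt (l.map f) i ↔ turnAt l i := by
  unfold turnAt
  rw [map_getD f (show i < l.length by omega), map_getD f (show i - 1 < l.length by omega),
    map_getD f h2]
  exact hperp _ _ _ _

include hinj hstep hperp in
lemma isTaxiWalk_map {l : List (ℤ × ℤ)} (hl : IsTaxiWalk l) : IsTaxiWalk (l.map f) := by
  obtain ⟨hne, hnd, hst, htn⟩ := hl
  refine ⟨by simpa using hne, hnd.map hinj, ?_, ?_⟩
  · intro i hi
    simp only [List.length_map] at hi
    rw [map_getD f (by omega), map_getD f hi]
    exact hstep _ _ (hst i hi)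
  · intro i h1 h2
    simp only [List.length_map] at h2
    rw [turnAt_map hperp h1 (by omega), turnAt_map hperp (by omega) (by omega)]
    exact htn i h1 h2

lemma turnWord_map (hperp : ∀ a b c d : ℤ × ℤ,
    perp (f b - f a) (f d - f c) ↔ perp (b - a) (d - c)) (l : List (ℤ × ℤ)) :
    turnWord (l.map f) = turnWord l := by
  unfold turnWord
  simp only [List.length_map]
  apply List.map_congr_left
  intro i hi
  simp only [List.mem_range] at hi
  simp only [decide_eq_decide]
  exact turnAt_map hperp (by omega) (by omega)

end MapWalk

-- Stage 4: take/drop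
lemma getD_take {l : List (ℤ × ℤ)} {k i : ℕ} (h : i < k) (h2 : i < l.length) :
    (l.take k).getD i 0 = l.getD i 0 := by
  rw [getD_lt (by simp; omega), getD_lt h2, List.getElem_take]

lemma getD_drop {l : List (ℤ × ℤ)} {a i : ℕ} (h : a + i < l.length) :
    (l.drop a).getD i 0 = l.getD (a + i) 0 := by
  rw [getD_lt (by simp; omega), getD_lt h, List.getElem_drop]

lemma turnAt_drop {l : List (ℤ × ℤ)} {a i : ℕ} (h1 : 1 ≤ i) (h2 : a + i + 1 < l.length) :
    turnAt (l.drop a) i ↔ turnAt l (a + i) := by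
  unfold turnAt
  rw [getD_drop (by omega), getD_drop (show a + (i-1) < l.length by omega),
    getD_drop (by omega)]
  have e1 : a + (i - 1) = a + i - 1 := by omega
  have e2 : a + (i + 1) = a + i + 1 := by omega
  rw [e1, e2]

lemma turnWord_drop (l : List (ℤ × ℤ)) (a : ℕ) :
    turnWord (l.drop a) = (turnWord l).drop a := by
  apply List.ext_getElem
  · simp [turnWord_length]; omega
  · intro j hj hj'
    have hlen : j < l.length - a - 2 := by simpa [turnWord_length] using hj
    have hj2 : a + j < l.length - 2 := by omega
    rw [turnWord_get (by simpa using hlen), List.getElem_drop,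
      turnWord_get (by omega)]
    simp only [decide_eq_decide]
    have : a + (j + 1) = a + j + 1 := by omega
    rw [← this, turnAt_drop (by omega) (by omega)]

lemma turnAt_congr {l l' : List (ℤ × ℤ)} {i : ℕ}
    (h : ∀ j, j ≤ i + 1 → l.getD j 0 = l'.getD j 0) : turnAt l i ↔ turnAt l' i := by
  unfold turnAt
  rw [h i (by omega), h (i-1) (by omega), h (i+1) (by omega)]

lemma take_originWalk {a b : ℕ} {l : List (ℤ × ℤ)} (hl : l ∈ originWalks (a + b + 1)) :
    l.take (a + 2) ∈ originWalks (a + 1) ∧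
      turnWord (l.take (a + 2)) = (turnWord l).take a := by
  obtain ⟨⟨hne, hnd, hst, htn⟩, hlen, h0⟩ := hl
  have hle : a + 2 ≤ l.length := by omega
  have hLlen : (l.take (a + 2)).length = a + 2 := by simp; omega
  have hag : ∀ i, i < a + 2 → (l.take (a + 2)).getD i 0 = l.getD i 0 := fun i hi =>
    getD_take hi (by omega)
  have hwalk : IsTaxiWalk (l.take (a + 2)) := by
    refine ⟨by simp [← List.length_pos_iff]; omega, hnd.sublist (List.take_sublist _ _), ?_, ?_⟩
    · intro i hi
      rw [hLlen] at hi
      rw [hag i (by omega), hag (i+1) (by omega)]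
      exact hst i (by omega)
    · intro i hi1 hi2
      rw [hLlen] at hi2
      have ht1 : turnAt (l.take (a+2)) i ↔ turnAt l i :=
        turnAt_congr (fun j hj => hag j (by omega))
      have ht2 : turnAt (l.take (a+2)) (i+1) ↔ turnAt l (i+1) :=
        turnAt_congr (fun j hj => hag j (by omega))
      rw [ht1, ht2]
      exact htn i hi1 (by omega)
  refine ⟨⟨hwalk, hLlen, ?_⟩, ?_⟩
  · rw [hag 0 (by omega)]; exact h0
  · apply List.ext_getElem
    · simp [turnWord_length, hLlen]; omega
    · intro j hj hj'
      have hja : j < a := by simpa [turnWord_length, hLlen] using hj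
      rw [turnWord_get (by omega : j < (l.take (a+2)).length - 2), List.getElem_take,
        turnWord_get (by omega : j < l.length - 2)]
      simp only [decide_eq_decide]
      exact turnAt_congr (fun i hi => hag i (by omega))

-- Stage 5: the normalized suffix
lemma drop_isTaxiWalk {a : ℕ} {l : List (ℤ × ℤ)} (hl : IsTaxiWalk l)
    (ha : a + 1 < l.length) : IsTaxiWalk (l.drop a) := by
  obtain ⟨hne, hnd, hst, htn⟩ := hl
  refine ⟨by simp [← List.length_pos_iff]; omega, hnd.sublist (List.drop_sublist _ _), ?_, ?_⟩
  · intro i hi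
    simp only [List.length_drop] at hi
    rw [getD_drop (by omega), getD_drop (by omega),
      show a + (i + 1) = a + i + 1 from by omega]
    exact hst (a + i) (by omega)
  · intro i hi1 hi2
    simp only [List.length_drop] at hi2
    rw [turnAt_drop hi1 (by omega), turnAt_drop (by omega) (by omega),
      show a + (i + 1) = a + i + 1 from by omega]
    exact htn (a + i) (by omega) (by omega)

lemma drop_originWalk {a b : ℕ} {l : List (ℤ × ℤ)} (hl : l ∈ originWalks (a + b + 1)) :
    ((l.drop a).map (normMap (l.getD a 0))) ∈ originWalks (b + 1) ∧
      turnWord ((l.drop a).map (normMap (l.getD a 0))) = (turnWord l).drop a := by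
  obtain ⟨hw, hlen, h0⟩ := hl
  have hwd : IsTaxiWalk (l.drop a) := drop_isTaxiWalk hw (by omega)
  have hwm : IsTaxiWalk ((l.drop a).map (normMap (l.getD a 0))) :=
    isTaxiWalk_map (norm_inj _) (fun u v h => norm_step _ h) (norm_perp _) hwd
  have hlen2 : ((l.drop a).map (normMap (l.getD a 0))).length = b + 2 := by
    simp; omega
  have hg0 : ((l.drop a).map (normMap (l.getD a 0))).getD 0 0 = 0 := by
    rw [map_getD _ (by simp; omega), getD_drop (by omega)]
    exact norm_self _
  refine ⟨⟨hwm, hlen2, hg0⟩, ?_⟩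
  rw [turnWord_map (norm_perp _), turnWord_drop]

-- Stage 6: word sets and counting
def EWalks (m : ℕ) : Set (List (ℤ × ℤ)) :=
  {l | l ∈ originWalks (m + 1) ∧ l.getD 1 0 = (1, 0)}

def EW (m : ℕ) : Set (List Bool) := turnWord '' EWalks m

lemma first_step {k : ℕ} {l : List (ℤ × ℤ)} (hk : 1 ≤ k) (hl : l ∈ originWalks k) :
    l.getD 1 0 = (1, 0) ∨ l.getD 1 0 = (0, 1) := by
  obtain ⟨⟨-, -, hst, -⟩, hlen, h0⟩ := hl
  have h := hst 0 (by omega)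
  rw [h0] at h
  rcases h with ⟨h, he⟩ | ⟨h, he⟩ | ⟨h, he⟩ | ⟨h, he⟩
  · left; rw [he]; norm_num
  · exact absurd h (by norm_num)
  · right; rw [he]; norm_num
  · exact absurd h (by norm_num)

lemma swap_originWalk {k : ℕ} {l : List (ℤ × ℤ)} (hl : l ∈ originWalks k) :
    l.map swapMap ∈ originWalks k := by
  obtain ⟨hw, hlen, h0⟩ := hl
  refine ⟨isTaxiWalk_map swap_inj (fun u v h => swap_step h) swap_perp hw, by simpa, ?_⟩
  rw [map_getD _ (by omega), h0]
  rfl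

lemma mem_originWalks_iff {k : ℕ} {l : List (ℤ × ℤ)} :
    l ∈ originWalks k ↔ IsTaxiWalk l ∧ l.length = k + 1 ∧ l.getD 0 0 = 0 := Iff.rfl

lemma word_mem_EW {m : ℕ} {l : List (ℤ × ℤ)} (hl : l ∈ originWalks (m + 1)) :
    turnWord l ∈ EW m := by
  rcases first_step (by omega) hl with h1 | h1
  · exact ⟨l, ⟨hl, h1⟩, rfl⟩
  · refine ⟨l.map swapMap, ⟨swap_originWalk hl, ?_⟩, turnWord_map swap_perp l⟩
    rw [map_getD _ (by have := hl.2.1; omega), h1]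
    rfl

lemma encode_injOn {k : ℕ} (hk : 1 ≤ k) : Set.InjOn encode (originWalks k) := by
  intro l hl l' hl' he
  rw [encode, encode, Prod.mk.injEq] at he
  obtain ⟨hb, hw⟩ := he
  have h1 : l.getD 1 0 = l'.getD 1 0 := by
    rcases first_step hk hl with h | h <;> rcases first_step hk hl' with h' | h' <;>
      rw [h, h'] <;> rw [h, h'] at hb <;> simp_all
  exact walk_ext hl.1 hl'.1 (by rw [hl.2.1, hl'.2.1]) (hl.2.2.trans hl'.2.2.symm) h1 hw

lemma originWalks_finite {k : ℕ} (hk : 1 ≤ k) : (originWalks k).Finite := by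
  apply Set.Finite.of_finite_image _ (encode_injOn hk)
  apply Set.Finite.subset (Set.Finite.prod (Set.finite_univ (α := Bool))
    (List.finite_length_eq Bool (k - 1)))
  rintro ⟨b, w⟩ ⟨l, hl, he⟩
  rw [encode, Prod.mk.injEq] at he
  refine ⟨trivial, ?_⟩
  rw [← he.2]
  simp only [Set.mem_setOf_eq, turnWord_length, hl.2.1]
  omega

lemma EW_finite (m : ℕ) : (EW m).Finite := by
  apply Set.Finite.subset (List.finite_length_eq Bool m)
  rintro w ⟨l, hl, rfl⟩
  simp only [Set.mem_setOf_eq, turnWord_length, hl.1.2.1]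
  omega

lemma EWalks_finite (m : ℕ) : (EWalks m).Finite :=
  (originWalks_finite (by omega)).subset fun l hl => hl.1

lemma taxiCount_eq (m : ℕ) : taxiCount (m + 1) = 2 * (EW m).ncard := by
  classical
  set N : Set (List (ℤ × ℤ)) := {l | l ∈ originWalks (m + 1) ∧ l.getD 1 0 = (0, 1)} with hN
  have hNfin : N.Finite := (originWalks_finite (by omega)).subset fun l hl => hl.1
  have hunion : originWalks (m + 1) = EWalks m ∪ N := by
    ext l
    constructor
    · intro hl
      rcases first_step (by omega) hl with h | h
      · exact Or.inl ⟨hl, h⟩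
      · exact Or.inr ⟨hl, h⟩
    · rintro (⟨hl, -⟩ | ⟨hl, -⟩) <;> exact hl
  have hdisj : Disjoint (EWalks m) N := by
    rw [Set.disjoint_left]
    rintro l ⟨-, h1⟩ ⟨-, h2⟩
    rw [h1] at h2
    exact absurd h2 (by norm_num)
  have hmapinj : Function.Injective (List.map swapMap) :=
    List.map_injective_iff.mpr swap_inj
  have himg : N = List.map swapMap '' EWalks m := by
    ext l
    constructor
    · rintro ⟨hl, h1⟩
      refine ⟨l.map swapMap, ⟨swap_originWalk hl, ?_⟩, ?_⟩
      · rw [map_getD _ (by have := hl.2.1; omega), h1]; rfl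
      · rw [List.map_map]
        have : swapMap ∘ swapMap = id := by funext q; rfl
        rw [this, List.map_id]
    · rintro ⟨l', ⟨hl', h1⟩, rfl⟩
      refine ⟨swap_originWalk hl', ?_⟩
      rw [map_getD _ (by have := hl'.2.1; omega), h1]
      rfl
  have hcardN : N.ncard = (EWalks m).ncard := by
    rw [himg]
    exact Set.ncard_image_of_injective _ hmapinj
  have hEW : (EW m).ncard = (EWalks m).ncard := by
    apply Set.ncard_image_of_injOn
    intro l hl l' hl' hw
    exact walk_ext hl.1.1 hl'.1.1 (by rw [hl.1.2.1, hl'.1.2.1])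
      (hl.1.2.2.trans hl'.1.2.2.symm) (hl.2.trans hl'.2.symm) hw
  rw [taxiCount, hunion, Set.ncard_union_eq hdisj (EWalks_finite m) hNfin, hcardN, hEW]
  ring

-- Stage 7: submultiplicativity and nonemptiness
lemma ncard_sprod {α β : Type*} (s : Set α) (t : Set β) :
    (s ×ˢ t).ncard = s.ncard * t.ncard := by
  rw [← Nat.card_coe_set_eq, ← Nat.card_coe_set_eq, ← Nat.card_coe_set_eq,
    Nat.card_congr (Equiv.Set.prod s t), Nat.card_prod]

lemma EW_submult (a b : ℕ) : (EW (a + b)).ncard ≤ (EW a).ncard * (EW b).ncard := by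
  classical
  have hsub : (fun w : List Bool => (w.take a, w.drop a)) '' EW (a + b) ⊆ EW a ×ˢ EW b := by
    rintro ⟨w1, w2⟩ ⟨w, ⟨l, ⟨hl, -⟩, rfl⟩, he⟩
    rw [Prod.mk.injEq] at he
    obtain ⟨rfl, rfl⟩ := he
    constructor
    · obtain ⟨hmem, hword⟩ := take_originWalk (a := a) (b := b) hl
      rw [← hword]
      exact word_mem_EW hmem
    · obtain ⟨hmem, hword⟩ := drop_originWalk (a := a) (b := b) hl
      rw [← hword]
      exact word_mem_EW hmem
  have hinj : Set.InjOn (fun w : List Bool => (w.take a, w.drop a)) (EW (a + b)) := by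
    intro w hw w' hw' he
    rw [Prod.mk.injEq] at he
    rw [← List.take_append_drop a w, ← List.take_append_drop a w', he.1, he.2]
  calc (EW (a + b)).ncard
      = ((fun w : List Bool => (w.take a, w.drop a)) '' EW (a + b)).ncard :=
        (Set.ncard_image_of_injOn hinj).symm
    _ ≤ (EW a ×ˢ EW b).ncard :=
        Set.ncard_le_ncard hsub ((EW_finite a).prod (EW_finite b))
    _ = (EW a).ncard * (EW b).ncard := ncard_sprod _ _

lemma EW_zero_card : (EW 0).ncard ≤ 1 := by
  have : EW 0 ⊆ {[]} := by
    rintro w ⟨l, hl, rfl⟩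
    have : (turnWord l).length = 0 := by
      rw [turnWord_length, hl.1.2.1]
    simpa using List.length_eq_zero_iff.mp this
  simpa using Set.ncard_le_ncard this (Set.finite_singleton _)

lemma EW_pow (n m : ℕ) : (EW (n * m)).ncard ≤ (EW n).ncard ^ m := by
  induction m with
  | zero => simpa using EW_zero_card
  | succ m ih =>
      have h1 : (EW (n * m + n)).ncard ≤ (EW (n * m)).ncard * (EW n).ncard :=
        EW_submult (n * m) n
      have : n * (m + 1) = n * m + n := by ring
      rw [this, pow_succ]
      exact h1.trans (Nat.mul_le_mul_right _ ih)

def straightWalk (k : ℕ) : List (ℤ × ℤ) :=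
  List.map (fun i : ℕ => ((i : ℤ), (0 : ℤ))) (List.range k)

lemma straight_length (k : ℕ) : (straightWalk k).length = k := by
  rw [straightWalk, List.length_map, List.length_range]

lemma straight_getD {k i : ℕ} (h : i < k) :
    (straightWalk k).getD i 0 = ((i : ℤ), 0) := by
  rw [getD_lt (by rw [straight_length]; exact h)]
  simp only [straightWalk, List.getElem_map, List.getElem_range]

lemma straight_mem (k : ℕ) : straightWalk (k + 2) ∈ EWalks k := by
  have hlen : (straightWalk (k + 2)).length = k + 2 := straight_length (k + 2)
  have hwalk : IsTaxiWalk (straightWalk (k + 2)) := by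
    refine ⟨by simp [← List.length_pos_iff, hlen], ?_, ?_, ?_⟩
    · rw [straightWalk]
      apply List.Nodup.map
      · intro i j hij
        rw [Prod.mk.injEq] at hij
        exact_mod_cast hij.1
      · exact List.nodup_range
    · intro i hi
      rw [hlen] at hi
      rw [straight_getD (by omega), straight_getD hi]
      left
      refine ⟨by norm_num, ?_⟩
      rw [Prod.mk.injEq]
      constructor
      · push_cast; ring
      · rfl
    · intro i hi1 hi2
      rw [hlen] at hi2
      rintro ⟨ht, -⟩
      unfold turnAt perp at ht
      rw [straight_getD (by omega), straight_getD (show i - 1 < k + 2 by omega),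
        straight_getD (by omega)] at ht
      simp only [Prod.fst_sub, Prod.snd_sub] at ht
      have : (i : ℤ) - (i - 1 : ℕ) = 1 := by
        have : ((i - 1 : ℕ) : ℤ) = (i : ℤ) - 1 := by push_cast [hi1]; ring
        rw [this]; ring
      rw [this] at ht
      have h2 : ((i + 1 : ℕ) : ℤ) - (i : ℤ) = 1 := by push_cast; ring
      rw [h2] at ht
      norm_num at ht
  exact ⟨⟨hwalk, hlen, by rw [straight_getD (by omega)]; rfl⟩,
    by rw [straight_getD (by omega)]; rfl⟩

lemma EW_card_pos (m : ℕ) : 1 ≤ (EW m).ncard := by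
  have hne : (EW m).Nonempty := ⟨turnWord (straightWalk (m + 2)), word_mem_EW (straight_mem m).1⟩
  exact (Set.ncard_pos (EW_finite m)).mpr hne

lemma taxiCount_le (n m : ℕ) : taxiCount (n * m + 1) ≤ 2 * (EW n).ncard ^ m := by
  rw [taxiCount_eq]
  exact Nat.mul_le_mul_left 2 (EW_pow n m)

set_option linter.unnecessarySeqFocus false in
/-- For every `n ≥ 1`, the taxi walk connective constant satisfies
`μ_taxi ≤ (c_{n+1}/2)^{1/n}`; equivalently, `2·μ_taxi^n ≤ c_{n+1}`. -/
theorem muTaxi_upper_bound_from_counts (μ : ℝ)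
    (hμ : Filter.Tendsto (fun n : ℕ => (taxiCount n : ℝ) ^ ((1 : ℝ) / (n : ℝ)))
      Filter.atTop (nhds μ))
    (n : ℕ) (hn : 1 ≤ n) :
    μ ≤ ((taxiCount (n + 1) : ℝ) / 2) ^ ((1 : ℝ) / (n : ℝ)) ∧
      2 * μ ^ n ≤ (taxiCount (n + 1) : ℝ) := by
  set D : ℝ := ((EW n).ncard : ℝ) with hD
  have hD1 : (1 : ℝ) ≤ D := by rw [hD]; exact_mod_cast EW_card_pos n
  have hD0 : (0 : ℝ) < D := lt_of_lt_of_le one_pos hD1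
  have hcn : (taxiCount (n + 1) : ℝ) = 2 * D := by
    rw [taxiCount_eq n]; push_cast; ring
  have hc : ∀ m : ℕ, (taxiCount (n * m + 1) : ℝ) ≤ 2 * D ^ m := by
    intro m
    have := taxiCount_le n m
    calc (taxiCount (n * m + 1) : ℝ) ≤ ((2 * (EW n).ncard ^ m : ℕ) : ℝ) := by exact_mod_cast this
      _ = 2 * D ^ m := by push_cast; ring
  have hφ : Tendsto (fun m : ℕ => n * m + 1) atTop atTop := by
    apply tendsto_atTop_mono (f := fun m : ℕ => m) _ tendsto_id
    intro m
    show m ≤ n * m + 1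
    have : m ≤ n * m := Nat.le_mul_of_pos_left m (by omega)
    omega
  have hg : Tendsto (fun m : ℕ => (taxiCount (n * m + 1) : ℝ) ^
      ((1 : ℝ) / ((n * m + 1 : ℕ) : ℝ))) atTop (nhds μ) := hμ.comp hφ
  -- exponent sequences
  have he : Tendsto (fun m : ℕ => (1 : ℝ) / ((n * m + 1 : ℕ) : ℝ)) atTop (nhds 0) :=
    tendsto_one_div_atTop_nhds_zero_nat.comp hφ
  have ht : Tendsto (fun m : ℕ => (m : ℝ) * ((1 : ℝ) / ((n * m + 1 : ℕ) : ℝ)))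
      atTop (nhds ((1 : ℝ) / (n : ℝ))) := by
    have hden : Tendsto (fun m : ℕ => (n : ℝ) + 1 / (m : ℝ)) atTop (nhds ((n : ℝ) + 0)) :=
      tendsto_const_nhds.add tendsto_one_div_atTop_nhds_zero_nat
    have hn0 : ((n : ℝ) + 0) ≠ 0 := by
      have : (1 : ℝ) ≤ (n : ℝ) := by exact_mod_cast hn
      linarith
    have hinv : Tendsto (fun m : ℕ => ((n : ℝ) + 1 / (m : ℝ))⁻¹) atTop
        (nhds (((n : ℝ) + 0)⁻¹)) := hden.inv₀ hn0
    have hs : Tendsto (fun m : ℕ => ((n : ℝ) + 1 / (m : ℝ))⁻¹) atTop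
        (nhds ((1 : ℝ) / (n : ℝ))) := by
      rw [add_zero, ← one_div] at hinv
      exact hinv
    apply hs.congr'
    filter_upwards [eventually_ge_atTop 1] with m hm
    have hm0 : (0 : ℝ) < (m : ℝ) := by exact_mod_cast hm
    have hnm : ((n * m + 1 : ℕ) : ℝ) = (n : ℝ) * (m : ℝ) + 1 := by push_cast; ring
    rw [hnm]
    have hpos : (0 : ℝ) < (n : ℝ) * (m : ℝ) + 1 := by positivity
    field_simp
  -- the dominating sequence tends to D ^ (1/n)
  have htwo : Tendsto (fun m : ℕ => (2 : ℝ) ^ ((1 : ℝ) / ((n * m + 1 : ℕ) : ℝ)))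
      atTop (nhds 1) := by
    have := (Real.continuousAt_const_rpow (a := (2:ℝ)) (b := 0) two_ne_zero).tendsto.comp he
    simpa [Function.comp_def] using this
  have hDlim : Tendsto (fun m : ℕ => D ^ ((m : ℝ) * ((1 : ℝ) / ((n * m + 1 : ℕ) : ℝ))))
      atTop (nhds (D ^ ((1 : ℝ) / (n : ℝ)))) :=
    (Real.continuousAt_const_rpow (ne_of_gt hD0)).tendsto.comp ht
  have hh : Tendsto (fun m : ℕ => (2 * D ^ m : ℝ) ^ ((1 : ℝ) / ((n * m + 1 : ℕ) : ℝ)))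
      atTop (nhds (D ^ ((1 : ℝ) / (n : ℝ)))) := by
    have heq : ∀ m : ℕ, (2 * D ^ m : ℝ) ^ ((1 : ℝ) / ((n * m + 1 : ℕ) : ℝ)) =
        (2 : ℝ) ^ ((1 : ℝ) / ((n * m + 1 : ℕ) : ℝ)) *
          D ^ ((m : ℝ) * ((1 : ℝ) / ((n * m + 1 : ℕ) : ℝ))) := by
      intro m
      rw [Real.mul_rpow (by norm_num) (by positivity), ← Real.rpow_natCast D m,
        ← Real.rpow_mul hD0.le]
    have := htwo.mul hDlim
    rw [one_mul] at this
    exact this.congr fun m => (heq m).symm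
  have hle : ∀ m : ℕ, (taxiCount (n * m + 1) : ℝ) ^ ((1 : ℝ) / ((n * m + 1 : ℕ) : ℝ)) ≤
      (2 * D ^ m : ℝ) ^ ((1 : ℝ) / ((n * m + 1 : ℕ) : ℝ)) := by
    intro m
    apply Real.rpow_le_rpow (by positivity) (hc m) (by positivity)
  have hmain : μ ≤ D ^ ((1 : ℝ) / (n : ℝ)) :=
    le_of_tendsto_of_tendsto' hg hh hle
  have hrw : ((taxiCount (n + 1) : ℝ) / 2) = D := by rw [hcn]; ring
  constructor
  · rw [hrw]; exact hmain
  · have hμ0 : 0 ≤ μ := ge_of_tendsto' hμ fun k => by positivity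
    have hpow : μ ^ n ≤ (D ^ ((1 : ℝ) / (n : ℝ))) ^ n := pow_le_pow_left₀ hμ0 hmain n
    have hDpow : (D ^ ((1 : ℝ) / (n : ℝ))) ^ n = D := by
      rw [← Real.rpow_natCast (D ^ ((1 : ℝ) / (n : ℝ))) n, ← Real.rpow_mul hD0.le]
      rw [show (1 : ℝ) / (n : ℝ) * (n : ℝ) = 1 from by
        field_simp]
      exact Real.rpow_one D
    rw [hcn]
    rw [hDpow] at hpow
    linarith
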